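/- The function u(n,m) = (1/4)(ζ+ζ₀)² − (ζ+ζ₀)S⁽⁰⁾ + 2S⁽¹⁾ − A² + (−1)^{n+m}A(ζ+ζ₁/2−2S⁽⁰⁾), with ζ = 2(np+mq), S⁽⁰⁾ = 2cpq/(pq+2c(mp+nq)), S⁽¹⁾ = 0, satisfies the H2 lattice equation (u−û̃)(ũ−û) + (p²−q²)(u+ũ+û+û̃) = p⁴−q⁴ at all lattice points where the denominator pq+2c(mp+nq) and its shifts are nonzero. -/
import Mathlib

theorem H2key (p q c A B C d E : ℝ) (hE : E^2 = 1)
    (h1 : d ≠ 0) (h2 : d + 2*c*q ≠ 0) (h3 : d + 2*c*p ≠ 0)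
    (h4 : d + 2*c*p + 2*c*q ≠ 0) :
    ((1/4)*B^2 - B*(2*c*p*q/d) - A^2 + E*A*(C - 2*(2*c*p*q/d))
      - ((1/4)*(B+2*p+2*q)^2 - (B+2*p+2*q)*(2*c*p*q/(d+2*c*p+2*c*q)) - A^2
        + E*A*(C+2*p+2*q - 2*(2*c*p*q/(d+2*c*p+2*c*q)))))
    * (((1/4)*(B+2*p)^2 - (B+2*p)*(2*c*p*q/(d+2*c*q)) - A^2
        + (-E)*A*(C+2*p - 2*(2*c*p*q/(d+2*c*q))))
      - ((1/4)*(B+2*q)^2 - (B+2*q)*(2*c*p*q/(d+2*c*p)) - A^2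
        + (-E)*A*(C+2*q - 2*(2*c*p*q/(d+2*c*p)))))
    + (p^2 - q^2) *
      (((1/4)*B^2 - B*(2*c*p*q/d) - A^2 + E*A*(C - 2*(2*c*p*q/d)))
      + ((1/4)*(B+2*p)^2 - (B+2*p)*(2*c*p*q/(d+2*c*q)) - A^2
        + (-E)*A*(C+2*p - 2*(2*c*p*q/(d+2*c*q))))
      + ((1/4)*(B+2*q)^2 - (B+2*q)*(2*c*p*q/(d+2*c*p)) - A^2
        + (-E)*A*(C+2*q - 2*(2*c*p*q/(d+2*c*p))))
      + ((1/4)*(B+2*p+2*q)^2 - (B+2*p+2*q)*(2*c*p*q/(d+2*c*p+2*c*q)) - A^2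
        + E*A*(C+2*p+2*q - 2*(2*c*p*q/(d+2*c*p+2*c*q)))))
    = p^4 - q^4 := by
  set S1 : ℝ := 2*c*p*q/d with hS1d
  set S2 : ℝ := 2*c*p*q/(d+2*c*q) with hS2d
  set S3 : ℝ := 2*c*p*q/(d+2*c*p) with hS3d
  set S4 : ℝ := 2*c*p*q/(d+2*c*p+2*c*q) with hS4d
  have hs1 : S1 * d = 2*c*p*q := by rw [hS1d]; field_simp
  have hs2 : S2 * (d+2*c*q) = 2*c*p*q := by rw [hS2d]; field_simp
  have hs3 : S3 * (d+2*c*p) = 2*c*p*q := by rw [hS3d]; field_simp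
  have hs4 : S4 * (d+2*c*p+2*c*q) = 2*c*p*q := by rw [hS4d]; field_simp
  have hD : d * (d+2*c*q) * (d+2*c*p) * (d+2*c*p+2*c*q) ≠ 0 :=
    mul_ne_zero (mul_ne_zero (mul_ne_zero h1 h2) h3) h4
  refine mul_left_cancel₀ hD ?_
  linear_combination (norm := ring1) ((q*B^2*d^3 + (-4)*q*A^2*d^3*E^2 + (2)*q^2*B*d^3 + (4)*q^2*A*d^3*E + (4)*q^2*c*B^2*d^2 + (-16)*q^2*c*A^2*d^2*E^2 + (8)*q^3*c*B*d^2 + (16)*q^3*c*A*d^2*E + (4)*q^3*c^2*B^2*d + (-16)*q^3*c^2*A^2*d*E^2 + (8)*q^4*c^2*B*d + (16)*q^4*c^2*A*d*E + (-1)*p*B^2*d^3 + (4)*p*A^2*d^3*E^2 + (4)*p*q^2*c*B*d^2 + (8)*p*q^2*c*A*d^2*E + (4)*p*q^2*c^2*B^2*d + (-16)*p*q^2*c^2*A^2*d*E^2 + (8)*p*q^3*c^2*B*d + (16)*p*q^3*c^2*A*d*E + (-2)*p^2*B*d^3 + (-4)*p^2*A*d^3*E + (-4)*p^2*c*B^2*d^2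 + (16)*p^2*c*A^2*d^2*E^2 + (-4)*p^2*q*c*B*d^2 + (-8)*p^2*q*c*A*d^2*E + (-4)*p^2*q*c^2*B^2*d + (16)*p^2*q*c^2*A^2*d*E^2 + (-8)*p^3*c*B*d^2 + (-16)*p^3*c*A*d^2*E + (-4)*p^3*c^2*B^2*d + (16)*p^3*c^2*A^2*d*E^2 + (-8)*p^3*q*c^2*B*d + (-16)*p^3*q*c^2*A*d*E + (-8)*p^4*c^2*B*d + (-16)*p^4*c^2*A*d*E)) * hs1 + ((B^2*d^3*S1 + (-4)*A^2*d^3*E^2*S1 + q*B^2*d^3 + (-4)*q*A^2*d^3*E^2 + (2)*q*c*B^2*d^2*S1 + (-8)*q*c*A^2*d^2*E^2*S1 + (2)*q^2*B*d^3 + (-4)*q^2*A*d^3*E + (2)*q^2*c*B^2*d^2 + (-8)*q^2*c*A^2*d^2*E^2 + (4)*q^3*c*B*d^2 + (-8)*q^3*c*A*d^2*E + (2)*p*B*d^3*S1 + p*B^2*d^3 + (4)*p*A*d^3*E*S1 + (-4)*p*A^2*d^3*E^2 + (4)*p*c*B^2*d^2*S1 + (-16)*p*c*A^2*d^2*E^2*S1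 + (4)*p*q*B*d^3 + (4)*p*q*c*B*d^2*S1 + (4)*p*q*c*B^2*d^2 + (8)*p*q*c*A*d^2*E*S1 + (-16)*p*q*c*A^2*d^2*E^2 + (4)*p*q*c^2*B^2*d*S1 + (-16)*p*q*c^2*A^2*d*E^2*S1 + (4)*p*q^2*d^3 + (12)*p*q^2*c*B*d^2 + (-8)*p*q^2*c*A*d^2*E + (4)*p*q^2*c^2*B^2*d + (-16)*p*q^2*c^2*A^2*d*E^2 + (8)*p*q^3*c*d^2 + (8)*p*q^3*c^2*B*d + (-16)*p*q^3*c^2*A*d*E + (2)*p^2*B*d^3 + (4)*p^2*A*d^3*E + (8)*p^2*c*B*d^2*S1 + (4)*p^2*c*B^2*d^2 + (16)*p^2*c*A*d^2*E*S1 + (-16)*p^2*c*A^2*d^2*E^2 + (4)*p^2*c^2*B^2*d*S1 + (-16)*p^2*c^2*A^2*d*E^2*S1 + (4)*p^2*q*d^3 + (12)*p^2*q*c*B*d^2 + (8)*p^2*q*c*A*d^2*E + (8)*p^2*q*c^2*B*d*S1 + (4)*p^2*q*c^2*B^2*d + (16)*p^2*q*c^2*A*d*E*S1 + (-16)*p^2*q*c^2*A^2*d*E^2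 + (16)*p^2*q^2*c*d^2 + (16)*p^2*q^2*c^2*B*d + (16)*p^2*q^3*c^2*d + (8)*p^3*c*B*d^2 + (16)*p^3*c*A*d^2*E + (8)*p^3*c^2*B*d*S1 + (4)*p^3*c^2*B^2*d + (16)*p^3*c^2*A*d*E*S1 + (-16)*p^3*c^2*A^2*d*E^2 + (8)*p^3*q*c*d^2 + (8)*p^3*q*c^2*B*d + (16)*p^3*q*c^2*A*d*E + (16)*p^3*q^2*c^2*d + (8)*p^4*c^2*B*d + (16)*p^4*c^2*A*d*E)) * hs2 + (((-1)*B^2*d^3*S1 + (4)*A^2*d^3*E^2*S1 + (-2)*q*B*d^3*S1 + (-1)*q*B^2*d^3 + (-4)*q*A*d^3*E*S1 + (4)*q*A^2*d^3*E^2 + (-4)*q*c*B^2*d^2*S1 + (16)*q*c*A^2*d^2*E^2*S1 + (-2)*q^2*B*d^3 + (-4)*q^2*A*d^3*E + (-8)*q^2*c*B*d^2*S1 + (-4)*q^2*c*B^2*d^2 + (-16)*q^2*c*A*d^2*E*S1 + (16)*q^2*c*A^2*d^2*E^2 + (-4)*q^2*c^2*B^2*d*S1 + (16)*q^2*c^2*A^2*d*E^2*S1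 + (-8)*q^3*c*B*d^2 + (-16)*q^3*c*A*d^2*E + (-8)*q^3*c^2*B*d*S1 + (-4)*q^3*c^2*B^2*d + (-16)*q^3*c^2*A*d*E*S1 + (16)*q^3*c^2*A^2*d*E^2 + (-8)*q^4*c^2*B*d + (-16)*q^4*c^2*A*d*E + (-1)*p*B^2*d^3 + (4)*p*A^2*d^3*E^2 + (-2)*p*c*B^2*d^2*S1 + (8)*p*c*A^2*d^2*E^2*S1 + (-4)*p*q*B*d^3 + (-4)*p*q*c*B*d^2*S1 + (-4)*p*q*c*B^2*d^2 + (-8)*p*q*c*A*d^2*E*S1 + (16)*p*q*c*A^2*d^2*E^2 + (-4)*p*q*c^2*B^2*d*S1 + (16)*p*q*c^2*A^2*d*E^2*S1 + (-4)*p*q^2*d^3 + (-12)*p*q^2*c*B*d^2 + (-8)*p*q^2*c*A*d^2*E + (-8)*p*q^2*c^2*B*d*S1 + (-4)*p*q^2*c^2*B^2*d + (-16)*p*q^2*c^2*A*d*E*S1 + (16)*p*q^2*c^2*A^2*d*E^2 + (-8)*p*q^3*c*d^2 + (-8)*p*q^3*c^2*B*d + (-16)*p*q^3*c^2*A*d*E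 + (-2)*p^2*B*d^3 + (4)*p^2*A*d^3*E + (-2)*p^2*c*B^2*d^2 + (8)*p^2*c*A^2*d^2*E^2 + (-4)*p^2*q*d^3 + (-12)*p^2*q*c*B*d^2 + (8)*p^2*q*c*A*d^2*E + (-4)*p^2*q*c^2*B^2*d + (16)*p^2*q*c^2*A^2*d*E^2 + (-16)*p^2*q^2*c*d^2 + (-16)*p^2*q^2*c^2*B*d + (-16)*p^2*q^3*c^2*d + (-4)*p^3*c*B*d^2 + (8)*p^3*c*A*d^2*E + (-8)*p^3*q*c*d^2 + (-8)*p^3*q*c^2*B*d + (16)*p^3*q*c^2*A*d*E + (-16)*p^3*q^2*c^2*d)) * hs3 + ((B^2*d^3*S3 + (-1)*B^2*d^3*S2 + (-4)*A^2*d^3*E^2*S3 + (4)*A^2*d^3*E^2*S2 + (4)*q*B*d^3*S3 + (-2)*q*B*d^3*S2 + (-1)*q*B^2*d^3 + (4)*q*A*d^3*E*S2 + (4)*q*A^2*d^3*E^2 + (2)*q*c*B^2*d^2*S3 + (-2)*q*c*B^2*d^2*S2 + (-8)*q*c*A^2*d^2*E^2*S3 + (8)*q*c*A^2*d^2*E^2*S2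 + (4)*q^2*d^3*S3 + (-2)*q^2*B*d^3 + (4)*q^2*A*d^3*E + (8)*q^2*c*B*d^2*S3 + (-4)*q^2*c*B*d^2*S2 + (-2)*q^2*c*B^2*d^2 + (8)*q^2*c*A*d^2*E*S2 + (8)*q^2*c*A^2*d^2*E^2 + (8)*q^3*c*d^2*S3 + (-4)*q^3*c*B*d^2 + (8)*q^3*c*A*d^2*E + (2)*p*B*d^3*S3 + (-4)*p*B*d^3*S2 + p*B^2*d^3 + (-4)*p*A*d^3*E*S3 + (-4)*p*A^2*d^3*E^2 + (2)*p*c*B^2*d^2*S3 + (-2)*p*c*B^2*d^2*S2 + (-8)*p*c*A^2*d^2*E^2*S3 + (8)*p*c*A^2*d^2*E^2*S2 + (4)*p*q*d^3*S3 + (-4)*p*q*d^3*S2 + (12)*p*q*c*B*d^2*S3 + (-12)*p*q*c*B*d^2*S2 + (-8)*p*q*c*A*d^2*E*S3 + (8)*p*q*c*A*d^2*E*S2 + (4)*p*q*c^2*B^2*d*S3 + (-4)*p*q*c^2*B^2*d*S2 + (-16)*p*q*c^2*A^2*d*E^2*S3 + (16)*p*q*c^2*A^2*d*E^2*S2 +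 (16)*p*q^2*c*d^2*S3 + (-8)*p*q^2*c*d^2*S2 + (-4)*p*q^2*c*B*d^2 + (8)*p*q^2*c*A*d^2*E + (16)*p*q^2*c^2*B*d*S3 + (-8)*p*q^2*c^2*B*d*S2 + (-4)*p*q^2*c^2*B^2*d + (16)*p*q^2*c^2*A*d*E*S2 + (16)*p*q^2*c^2*A^2*d*E^2 + (16)*p*q^3*c^2*d*S3 + (-8)*p*q^3*c^2*B*d + (16)*p*q^3*c^2*A*d*E + (-4)*p^2*d^3*S2 + (2)*p^2*B*d^3 + (-4)*p^2*A*d^3*E + (4)*p^2*c*B*d^2*S3 + (-8)*p^2*c*B*d^2*S2 + (2)*p^2*c*B^2*d^2 + (-8)*p^2*c*A*d^2*E*S3 + (-8)*p^2*c*A^2*d^2*E^2 + (8)*p^2*q*c*d^2*S3 + (-16)*p^2*q*c*d^2*S2 + (4)*p^2*q*c*B*d^2 + (-8)*p^2*q*c*A*d^2*E + (8)*p^2*q*c^2*B*d*S3 + (-16)*p^2*q*c^2*B*d*S2 + (4)*p^2*q*c^2*B^2*d + (-16)*p^2*q*c^2*A*d*E*S3 + (-16)*p^2*q*c^2*A^2*d*E^2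 + (16)*p^2*q^2*c^2*d*S3 + (-16)*p^2*q^2*c^2*d*S2 + (-8)*p^3*c*d^2*S2 + (4)*p^3*c*B*d^2 + (-8)*p^3*c*A*d^2*E + (-16)*p^3*q*c^2*d*S2 + (8)*p^3*q*c^2*B*d + (-16)*p^3*q*c^2*A*d*E)) * hs4 + (((-4)*q^2*A^2*d^4 + (-16)*q^3*c*A^2*d^3 + (-16)*q^4*c^2*A^2*d^2 + (-16)*p*q^2*c*A^2*d^3 + (-48)*p*q^3*c^2*A^2*d^2 + (-32)*p*q^4*c^3*A^2*d + (4)*p^2*A^2*d^4 + (16)*p^2*q*c*A^2*d^3 + (-32)*p^2*q^3*c^3*A^2*d + (16)*p^3*c*A^2*d^3 + (48)*p^3*q*c^2*A^2*d^2 + (32)*p^3*q^2*c^3*A^2*d + (16)*p^4*c^2*A^2*d^2 + (32)*p^4*q*c^3*A^2*d)) * hE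

/-- The N=2 rational solution
`u = (1/4)(ζ+ζ₀)² − (ζ+ζ₀)S⁽⁰⁾ + 2S⁽¹⁾ − A² + (−1)^{n+m}A(ζ+ζ₁/2−2S⁽⁰⁾)` with
`S⁽¹⁾ = 0` satisfies the re-parameterized H2 equation
`(u−û̃)(ũ−û) + (p²−q²)(u+ũ+û+û̃) = p⁴−q⁴`. -/
theorem stmt_12 (p q c A ζ₀ ζ₁ : ℝ) (hp : p ≠ 0) (hq : q ≠ 0) (hc : c ≠ 0)
    (ζ S₀ S₁ u : ℤ → ℤ → ℝ)
    (hζ : ∀ n m : ℤ, ζ n m = 2*((n : ℝ)*p + (m : ℝ)*q))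
    (hS₀ : ∀ n m : ℤ, S₀ n m = 2*c*p*q / (p*q + 2*c*((m : ℝ)*p + (n : ℝ)*q)))
    (hS₁ : ∀ n m : ℤ, S₁ n m = 0)
    (hu : ∀ n m : ℤ, u n m = (1/4)*(ζ n m + ζ₀)^2 - (ζ n m + ζ₀)*S₀ n m
      + 2*S₁ n m - A^2 + (-1 : ℝ)^(n+m) * A * (ζ n m + ζ₁/2 - 2*S₀ n m))
    (n m : ℤ)
    (h1 : p*q + 2*c*((m : ℝ)*p + (n : ℝ)*q) ≠ 0)
    (h2 : p*q + 2*c*((m : ℝ)*p + ((n : ℝ)+1)*q) ≠ 0)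
    (h3 : p*q + 2*c*(((m : ℝ)+1)*p + (n : ℝ)*q) ≠ 0)
    (h4 : p*q + 2*c*(((m : ℝ)+1)*p + ((n : ℝ)+1)*q) ≠ 0) :
    (u n m - u (n+1) (m+1)) * (u (n+1) m - u n (m+1))
      + (p^2 - q^2) * (u n m + u (n+1) m + u n (m+1) + u (n+1) (m+1))
      = p^4 - q^4 := by
  have e2 : ((-1 : ℝ))^(n+1+m) = -((-1:ℝ))^(n+m) := by
    rw [show n+1+m = (n+m)+1 by ring, zpow_add_one₀ (by norm_num : (-1:ℝ) ≠ 0)]; ring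
  have e3 : ((-1 : ℝ))^(n+(m+1)) = -((-1:ℝ))^(n+m) := by
    rw [show n+(m+1) = (n+m)+1 by ring, zpow_add_one₀ (by norm_num : (-1:ℝ) ≠ 0)]; ring
  have e4 : ((-1 : ℝ))^(n+1+(m+1)) = ((-1:ℝ))^(n+m) := by
    rw [show n+1+(m+1) = (n+m)+2 by ring, zpow_add₀ (by norm_num : (-1:ℝ) ≠ 0)]; norm_num
  have hE : ((-1 : ℝ)^(n+m))^2 = 1 := by
    rcases Int.even_or_odd (n+m) with h | h
    · rw [Even.neg_one_zpow h]; norm_num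
    · rw [Odd.neg_one_zpow h]; norm_num
  have h2' : (p*q + 2*c*((m : ℝ)*p + (n : ℝ)*q)) + 2*c*q ≠ 0 := by
    rw [show (p*q + 2*c*((m : ℝ)*p + (n : ℝ)*q)) + 2*c*q
      = p*q + 2*c*((m : ℝ)*p + ((n : ℝ)+1)*q) by ring]; exact h2
  have h3' : (p*q + 2*c*((m : ℝ)*p + (n : ℝ)*q)) + 2*c*p ≠ 0 := by
    rw [show (p*q + 2*c*((m : ℝ)*p + (n : ℝ)*q)) + 2*c*p
      = p*q + 2*c*(((m : ℝ)+1)*p + (n : ℝ)*q) by ring]; exact h3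
  have h4' : (p*q + 2*c*((m : ℝ)*p + (n : ℝ)*q)) + 2*c*p + 2*c*q ≠ 0 := by
    rw [show (p*q + 2*c*((m : ℝ)*p + (n : ℝ)*q)) + 2*c*p + 2*c*q
      = p*q + 2*c*(((m : ℝ)+1)*p + ((n : ℝ)+1)*q) by ring]; exact h4
  have H := H2key p q c A (2*((n : ℝ)*p + (m : ℝ)*q) + ζ₀)
    (2*((n : ℝ)*p + (m : ℝ)*q) + ζ₁/2)
    (p*q + 2*c*((m : ℝ)*p + (n : ℝ)*q)) ((-1 : ℝ)^(n+m)) hE h1 h2' h3' h4'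
  rw [hu n m, hu (n+1) m, hu n (m+1), hu (n+1) (m+1), hζ, hζ, hζ, hζ,
    hS₀, hS₀, hS₀, hS₀, hS₁, hS₁, hS₁, hS₁, e2, e3, e4]
  push_cast
  linear_combination H
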